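/- For a prime p ≥ 7 and 1 ≤ a ≤ 5, let C_a^{(3)} be the number of 6-tuples (x_1,…,x_6) with 0 ≤ x_i < p and Σx_i = 3p - a. Then C_1^{(3)} + C_5^{(3)} ≡ (12/5)p (mod p²), C_2^{(3)} + C_4^{(3)} ≡ -(3/5)p (mod p²), and C_3^{(3)} ≡ (1/5)p (mod p²). -/

import Mathlib

/-- `x ≡ y (mod p^r)` as p-integral rationals. -/
def ratCong (p r : ℕ) (x y : ℚ) : Prop :=
  ∃ z : ℚ, x - y = (p : ℚ) ^ r * z ∧ ¬ (p ∣ z.den)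

/-- `C_a^{(m)}`: number of 6-tuples `(x₁,…,x₆)` with `0 ≤ xᵢ < p` and `Σ xᵢ = m·p - a`. -/
def Cam (p m a : ℕ) : ℕ :=
  ((Fintype.piFinset fun _ : Fin 6 => Finset.range p).filter
    (fun x => (∑ i, (x i : ℤ)) = m * p - a)).card

open Finset PowerSeries

lemma choose5 (n : ℕ) : (((n + 4).choose 5 : ℕ) : ℚ) =
    (n : ℚ) * (n + 1) * (n + 2) * (n + 3) * (n + 4) / 120 := by
  have h : (n + 4).descFactorial 5 = 120 * (n + 4).choose 5 :=
    Nat.descFactorial_eq_factorial_mul_choose _ _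
  have s4 : n + 4 - 4 = n := by omega
  have s3 : n + 4 - 3 = n + 1 := by omega
  have s2 : n + 4 - 2 = n + 2 := by omega
  have s1 : n + 4 - 1 = n + 3 := by omega
  have h2 : (n + 4).descFactorial 5 = n * (n + 1) * (n + 2) * (n + 3) * (n + 4) := by
    simp only [Nat.descFactorial_succ, Nat.descFactorial_zero, s4, s3, s2, s1,
      Nat.sub_zero, mul_one]
    ring
  have := congrArg (fun m : ℕ => (m : ℚ)) (h ▸ h2)
  push_cast at this
  field_simp
  linarith [this]

lemma cam_eq (p a : ℕ) (ha1 : 1 ≤ a) (ha5 : a ≤ 5) (hp7 : 7 ≤ p) :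
    (Cam p 3 a : ℚ) = ((5 + (3 * p - a)).choose 5 : ℚ)
      - 6 * ((5 + (2 * p - a)).choose 5 : ℚ) + 15 * ((5 + (p - a)).choose 5 : ℚ) := by
  -- Step A : Cam as a filter with a ℕ condition
  have hA : Cam p 3 a = ((Fintype.piFinset fun _ : Fin 6 => Finset.range p).filter
      (fun x => (∑ i, x i) = 3 * p - a)).card := by
    unfold Cam
    congr 1
    apply Finset.filter_congr
    intro x _
    have hc : (∑ i, (x i : ℤ)) = ((∑ i, x i : ℕ) : ℤ) := by push_cast; rfl
    rw [hc]
    constructor <;> intro h <;> omega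
  -- Step A2 : the card is a power series coefficient
  have hA2 : ((Cam p 3 a : ℕ) : ℚ)
      = (coeff (R := ℚ) (3 * p - a)) ((∑ i ∈ range p, (X : ℚ⟦X⟧) ^ i) ^ 6) := by
    have hpow : (∑ i ∈ range p, (X : ℚ⟦X⟧) ^ i) ^ 6
        = ∏ _k : Fin 6, (∑ i ∈ range p, (X : ℚ⟦X⟧) ^ i) := by
      rw [Finset.prod_const, Finset.card_univ, Fintype.card_fin]
    rw [hA, hpow, Finset.prod_univ_sum]
    have : ∀ x : Fin 6 → ℕ, (∏ k : Fin 6, (X : ℚ⟦X⟧) ^ (x k)) = X ^ (∑ k, x k) :=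
      fun x => Finset.prod_pow_eq_pow_sum _ _ _
    simp only [this, map_sum, PowerSeries.coeff_X_pow]
    rw [Finset.card_filter]
    push_cast
    congr 1
    ext x
    by_cases h : (∑ k, x k) = 3 * p - a
    · simp [h]
    · rw [if_neg h, if_neg (fun hh => h hh.symm)]
  -- Step B : geometric series identity
  have hval : (invOneSubPow ℚ 6).val = PowerSeries.mk fun m => ((5 + m).choose 5 : ℚ) := by
    rw [show (6 : ℕ) = 5 + 1 from rfl]
    exact invOneSubPow_val_succ_eq_mk_add_choose _ _
  have hB : (∑ i ∈ range p, (X : ℚ⟦X⟧) ^ i) ^ 6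
      = (1 - X ^ p) ^ 6 * (invOneSubPow ℚ 6).val := by
    have h1 : (∑ i ∈ range p, (X : ℚ⟦X⟧) ^ i) * (1 - X) = 1 - X ^ p := by
      have := geom_sum_mul (X : ℚ⟦X⟧) p
      linear_combination -this
    have hinv : ((1 - X : ℚ⟦X⟧) ^ 6) * (invOneSubPow ℚ 6).val = 1 := by
      rw [← invOneSubPow_inv_eq_one_sub_pow]
      exact (invOneSubPow ℚ 6).inv_val
    calc (∑ i ∈ range p, (X : ℚ⟦X⟧) ^ i) ^ 6
        = (∑ i ∈ range p, (X : ℚ⟦X⟧) ^ i) ^ 6 * (((1 - X) ^ 6) * (invOneSubPow ℚ 6).val) := by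
          rw [hinv, mul_one]
      _ = ((∑ i ∈ range p, (X : ℚ⟦X⟧) ^ i) * (1 - X)) ^ 6 * (invOneSubPow ℚ 6).val := by
          rw [mul_pow]; ring
      _ = (1 - X ^ p) ^ 6 * (invOneSubPow ℚ 6).val := by rw [h1]
  -- Step C : expand the coefficient
  have hC : (coeff (R := ℚ) (3 * p - a)) ((1 - X ^ p) ^ 6 * (invOneSubPow ℚ 6).val)
      = ∑ j ∈ range 7, ((-1 : ℚ) ^ j * (Nat.choose 6 j : ℚ)) *
          (if p * j ≤ 3 * p - a then ((5 + (3 * p - a - p * j)).choose 5 : ℚ) else 0) := by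
    rw [hval]
    have hexp : ((1 - X ^ p : ℚ⟦X⟧)) ^ 6 = ∑ j ∈ range 7, (-(X : ℚ⟦X⟧) ^ p) ^ j * 1 ^ (6 - j) *
        (Nat.choose 6 j : ℚ⟦X⟧) := by
      rw [← add_pow]
      ring_nf
    rw [hexp, Finset.sum_mul, map_sum]
    apply Finset.sum_congr rfl
    intro j _
    have hterm : (-(X : ℚ⟦X⟧) ^ p) ^ j * 1 ^ (6 - j) * (Nat.choose 6 j : ℚ⟦X⟧) *
        (PowerSeries.mk fun m => ((5 + m).choose 5 : ℚ))
        = PowerSeries.C (R := ℚ) ((-1 : ℚ) ^ j * (Nat.choose 6 j : ℚ)) *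
          ((PowerSeries.mk fun m => ((5 + m).choose 5 : ℚ)) * X ^ (p * j)) := by
      rw [map_mul, map_pow, map_neg, map_one, map_natCast]
      rw [pow_mul]
      ring
    rw [hterm, PowerSeries.coeff_C_mul, PowerSeries.coeff_mul_X_pow']
    congr 1
    split_ifs with h
    · rw [PowerSeries.coeff_mk]
    · rfl
  rw [hA2, hB, hC]
  -- Step D : evaluate the sum
  have h0 : p * 0 ≤ 3 * p - a := by clear hA hA2 hval hB hC; omega
  have h1 : p * 1 ≤ 3 * p - a := by clear hA hA2 hval hB hC; omega
  have h2 : p * 2 ≤ 3 * p - a := by clear hA hA2 hval hB hC; omega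
  have h3 : ¬ p * 3 ≤ 3 * p - a := by clear hA hA2 hval hB hC; omega
  have h4 : ¬ p * 4 ≤ 3 * p - a := by clear hA hA2 hval hB hC; omega
  have h5 : ¬ p * 5 ≤ 3 * p - a := by clear hA hA2 hval hB hC; omega
  have h6 : ¬ p * 6 ≤ 3 * p - a := by clear hA hA2 hval hB hC; omega
  rw [Finset.sum_range_succ, Finset.sum_range_succ, Finset.sum_range_succ,
    Finset.sum_range_succ, Finset.sum_range_succ, Finset.sum_range_succ,
    Finset.sum_range_succ]
  rw [if_pos h0, if_pos h1, if_pos h2, if_neg h3, if_neg h4, if_neg h5, if_neg h6]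
  have e1 : 3 * p - a - p * 1 = 2 * p - a := by clear hA hA2 hval hB hC; omega
  have e2 : 3 * p - a - p * 2 = p - a := by clear hA hA2 hval hB hC; omega
  have e0 : 3 * p - a - p * 0 = 3 * p - a := by clear hA hA2 hval hB hC; omega
  rw [e0, e1, e2]
  have hch : (Nat.choose 6 2) = 15 := by decide
  norm_num [hch]
  ring

lemma not_dvd_den (p : ℕ) (hp : p.Prime) (hp7 : 7 ≤ p) (A d : ℤ) (hd : d ∣ 20) :
    ¬ (p : ℕ) ∣ ((A : ℚ) / (d : ℚ)).den := by
  intro h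
  have h1 : (((A : ℚ) / (d : ℚ)).den : ℤ) ∣ d := by
    rw [← Rat.divInt_eq_div]; exact Rat.den_dvd A d
  have h2 : (p : ℤ) ∣ 20 := dvd_trans (dvd_trans (Int.natCast_dvd_natCast.mpr h) h1) hd
  have h3 : p ∣ 20 := by exact_mod_cast h2
  have h4 : p ≤ 20 := Nat.le_of_dvd (by norm_num) h3
  interval_cases p <;> revert h3 hp <;> decide

theorem stmt_8 (p : ℕ) (hp : p.Prime) (hp7 : 7 ≤ p) :
    ratCong p 2 ((Cam p 3 1 : ℚ) + Cam p 3 5 : ℚ) ((12 / 5 : ℚ) * p) ∧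
    ratCong p 2 ((Cam p 3 2 : ℚ) + Cam p 3 4 : ℚ) (-(3 / 5 : ℚ) * p) ∧
    ratCong p 2 ((Cam p 3 3 : ℚ)) ((1 / 5 : ℚ) * p) := by
  obtain ⟨b, hb⟩ : ∃ b : ℕ, p = b + 5 := ⟨p - 5, by omega⟩
  have hc1 := cam_eq p 1 (by norm_num) (by norm_num) hp7
  have hc2 := cam_eq p 2 (by norm_num) (by norm_num) hp7
  have hc3 := cam_eq p 3 (by norm_num) (by norm_num) hp7
  have hc4 := cam_eq p 4 (by norm_num) (by norm_num) hp7
  have hc5 := cam_eq p 5 (by norm_num) (by norm_num) hp7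
  -- rewrite all choose arguments in terms of b
  have r11 : 5 + (3 * p - 1) = (3 * b + 15) + 4 := by omega
  have r12 : 5 + (2 * p - 1) = (2 * b + 10) + 4 := by omega
  have r13 : 5 + (p - 1) = (b + 5) + 4 := by omega
  have r21 : 5 + (3 * p - 2) = (3 * b + 14) + 4 := by omega
  have r22 : 5 + (2 * p - 2) = (2 * b + 9) + 4 := by omega
  have r23 : 5 + (p - 2) = (b + 4) + 4 := by omega
  have r31 : 5 + (3 * p - 3) = (3 * b + 13) + 4 := by omega
  have r32 : 5 + (2 * p - 3) = (2 * b + 8) + 4 := by omega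
  have r33 : 5 + (p - 3) = (b + 3) + 4 := by omega
  have r41 : 5 + (3 * p - 4) = (3 * b + 12) + 4 := by omega
  have r42 : 5 + (2 * p - 4) = (2 * b + 7) + 4 := by omega
  have r43 : 5 + (p - 4) = (b + 2) + 4 := by omega
  have r51 : 5 + (3 * p - 5) = (3 * b + 11) + 4 := by omega
  have r52 : 5 + (2 * p - 5) = (2 * b + 6) + 4 := by omega
  have r53 : 5 + (p - 5) = (b + 1) + 4 := by omega
  rw [r11, r12, r13, choose5, choose5, choose5] at hc1
  rw [r21, r22, r23, choose5, choose5, choose5] at hc2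
  rw [r31, r32, r33, choose5, choose5, choose5] at hc3
  rw [r41, r42, r43, choose5, choose5, choose5] at hc4
  rw [r51, r52, r53, choose5, choose5, choose5] at hc5
  have hpQ : (p : ℚ) = (b : ℚ) + 5 := by rw [hb]; push_cast; ring
  refine ⟨⟨((11 * (p : ℤ) ^ 3 - 35 * (p : ℤ)) : ℤ) / ((10 : ℤ) : ℚ), ?_, ?_⟩,
      ⟨((11 * (p : ℤ) ^ 3 - 5 * (p : ℤ)) : ℤ) / ((10 : ℤ) : ℚ), ?_, ?_⟩,
      ⟨((11 * (p : ℤ) ^ 3 + 5 * (p : ℤ)) : ℤ) / ((20 : ℤ) : ℚ), ?_, ?_⟩⟩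
  · rw [hc1, hc5]
    push_cast
    rw [hpQ]
    ring
  · exact not_dvd_den p hp hp7 _ _ (by norm_num)
  · rw [hc2, hc4]
    push_cast
    rw [hpQ]
    ring
  · exact not_dvd_den p hp hp7 _ _ (by norm_num)
  · rw [hc3]
    push_cast
    rw [hpQ]
    ring
  · exact not_dvd_den p hp hp7 _ _ (by norm_num)
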